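/- Jensen's formula bound: let f be holomorphic on a neighborhood of the closed disc {|z| ≤ R} with f(0) ≠ 0, and let n(r) denote the number of zeros of f (with multiplicity) in {|z| ≤ r} for 0 < r < R. Then n(r) · log(R/r) ≤ log( sup_{|z| ≤ R} |f| / |f(0)| ). -/

import Mathlib

open Metric Set Filter Topology

/-- Factor out finitely many distinct zeros of a holomorphic function. -/
lemma factor_zeros (T : Finset ℂ) : ∀ (V : Set ℂ), IsOpen V → (↑T : Set ℂ) ⊆ V →
    ∀ f : ℂ → ℂ, DifferentiableOn ℂ f V → (∀ a ∈ T, f a = 0) →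
    ∃ g : ℂ → ℂ, DifferentiableOn ℂ g V ∧ ∀ z, f z = (∏ a ∈ T, (z - a)) * g z := by
  classical
  induction T using Finset.induction with
  | empty => exact fun V _ _ f hf _ => ⟨f, hf, by simp⟩
  | @insert a T ha ih =>
    intro V hV hTV f hf hz
    have haV : a ∈ V := hTV (by simp)
    have hfa : f a = 0 := hz a (by simp)
    have hd : DifferentiableOn ℂ (dslope f a) V :=
      (Complex.differentiableOn_dslope (hV.mem_nhds haV)).2 hf
    have hfac : ∀ z, f z = (z - a) * dslope f a z := by
      intro z
      have := sub_smul_dslope f a z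
      rw [hfa, sub_zero, smul_eq_mul] at this
      exact this.symm
    have hz' : ∀ b ∈ T, dslope f a b = 0 := by
      intro b hb
      have hba : b ≠ a := fun h => ha (h ▸ hb)
      rw [dslope_of_ne f hba, slope, hz b (Finset.mem_insert_of_mem hb), hfa]; simp
    obtain ⟨g, hg, hgf⟩ := ih V hV (fun x hx => hTV (by simp [hx])) (dslope f a) hd hz'
    refine ⟨g, hg, fun z => ?_⟩
    rw [hfac z, hgf z, Finset.prod_insert ha, mul_assoc]

/-- Jensen's formula zero-counting bound: n(r)·log(R/r) ≤ log(sup_{|z|≤R}|f| / |f(0)|). -/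
theorem jensen_zero_count (f : ℂ → ℂ) (U : Set ℂ) (hU : IsOpen U) (R r : ℝ)
    (hsub : Metric.closedBall 0 R ⊆ U) (hf : DifferentiableOn ℂ f U)
    (h0 : f 0 ≠ 0) (hr : 0 < r) (hrR : r < R) :
    (((f ⁻¹' {0}) ∩ Metric.closedBall 0 r).ncard : ℝ) * Real.log (R / r) ≤
      Real.log (sSup ((fun z => ‖f z‖) '' Metric.closedBall 0 R) /
        ‖f 0‖) := by
  classical
  have hR : 0 < R := hr.trans hrR
  set M : ℝ := sSup ((fun z => ‖f z‖) '' Metric.closedBall 0 R) with hM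
  -- M bounds |f| on the closed ball
  have hfc : ContinuousOn f (closedBall 0 R) := (hf.mono hsub).continuousOn
  have hMge : ∀ z ∈ closedBall 0 R, ‖f z‖ ≤ M := by
    intro z hz
    apply le_csSup _ (mem_image_of_mem _ hz)
    exact ((isCompact_closedBall 0 R).image_of_continuousOn
      (continuous_norm.comp_continuousOn hfc)).bddAbove
  have h0mem : (0 : ℂ) ∈ closedBall 0 R := by simp [hR.le]
  have hf0pos : 0 < ‖f 0‖ := by simpa using h0
  have hMpos : 0 < M := lt_of_lt_of_le hf0pos (hMge 0 h0mem)
  -- a slightly larger ball V inside U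
  obtain ⟨δ, hδ, hthick⟩ := (isCompact_closedBall (0:ℂ) R).exists_thickening_subset_open hU hsub
  set V : Set ℂ := ball 0 (R + δ) with hV
  have hVsub : V ⊆ U := by
    rw [hV, add_comm R δ, ← thickening_closedBall hδ hR.le]; exact hthick
  have hVopen : IsOpen V := isOpen_ball
  have hcbV : closedBall 0 R ⊆ V := closedBall_subset_ball (by linarith)
  have hfV : DifferentiableOn ℂ f V := hf.mono hVsub
  have h0V : (0 : ℂ) ∈ V := hcbV h0mem
  -- finiteness of the zero set
  set S : Set ℂ := (f ⁻¹' {0}) ∩ closedBall 0 r with hS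
  have hScb : S ⊆ closedBall 0 R :=
    inter_subset_right.trans (closedBall_subset_closedBall hrR.le)
  have hSV : S ⊆ V := hScb.trans hcbV
  have hSclosed : IsClosed S := by
    have : IsClosed (closedBall (0:ℂ) r ∩ f ⁻¹' {0}) :=
      (hfc.mono (closedBall_subset_closedBall hrR.le)).preimage_isClosed_of_isClosed
        isClosed_closedBall isClosed_singleton
    rwa [inter_comm] at this
  have hScompact : IsCompact S :=
    (isCompact_closedBall 0 r).of_isClosed_subset hSclosed inter_subset_right
  have hAn : AnalyticOnNhd ℂ f V := hfV.analyticOnNhd hVopen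
  have hdisc : DiscreteTopology S := by
    rw [discreteTopology_subtype_iff]
    intro x hx
    rcases (hAn x (hSV hx)).eventually_eq_zero_or_eventually_ne_zero with h | h
    · exfalso
      have : EqOn f 0 V :=
        hAn.eqOn_zero_of_preconnected_of_eventuallyEq_zero
          ((convex_ball (0:ℂ) (R+δ)).isPreconnected) (hSV hx) h
      exact h0 (this h0V)
    · rw [← Filter.empty_mem_iff_bot]
      have hS' : S ∈ 𝓝[≠] x ⊓ 𝓟 S := Filter.mem_inf_of_right (Filter.mem_principal_self S)
      have h' : {z | f z ≠ 0} ∈ 𝓝[≠] x ⊓ 𝓟 S := Filter.mem_inf_of_left h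
      filter_upwards [h', hS'] with z hz1 hz2
      exact hz1 hz2.1
  have hfin : S.Finite := hScompact.finite (isDiscrete_iff_discreteTopology.mpr hdisc)
  set T : Finset ℂ := hfin.toFinset with hT
  have hmemT : ∀ a, a ∈ T ↔ a ∈ S := fun a => hfin.mem_toFinset
  set n : ℕ := T.card with hn
  have hncard : S.ncard = n := by rw [hn, hT, Set.ncard_eq_toFinset_card S hfin]
  -- factor the zeros
  obtain ⟨g, hg, hgf⟩ := factor_zeros T V hVopen (fun a ha => hSV ((hmemT a).1 ha)) f hfV
    (fun a ha => ((hmemT a).1 ha).1)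
  -- the Blaschke-type modification
  set G : ℂ → ℂ := fun z => g z * ∏ a ∈ T, ((R : ℂ)^2 - (starRingEnd ℂ) a * z) with hG
  have hGdiff : DifferentiableOn ℂ G V := by
    apply hg.mul
    apply DifferentiableOn.fun_finsetProd
    intro a _
    exact (differentiableOn_const _).sub ((differentiableOn_const _).mul differentiableOn_id)
  -- boundary estimate
  have hbdry : ∀ z ∈ sphere (0:ℂ) R, ‖G z‖ ≤ R ^ n * M := by
    intro z hz
    have hzR : ‖z‖ = R := by simpa using hz
    have hzz : (R : ℂ)^2 = z * (starRingEnd ℂ) z := by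
      rw [Complex.mul_conj', hzR]
    have key : ∀ a ∈ T, ‖(R : ℂ)^2 - (starRingEnd ℂ) a * z‖
        = ‖z - a‖ * R := by
      intro a _
      have : (R : ℂ)^2 - (starRingEnd ℂ) a * z = (starRingEnd ℂ) (z - a) * z := by
        rw [hzz]; ring_nf; rw [map_sub]; ring
      rw [this, norm_mul, Complex.norm_conj, hzR]
    have hGz : ‖G z‖ = ‖f z‖ * R ^ n := by
      rw [hG]
      simp only [norm_mul, norm_prod]
      rw [Finset.prod_congr rfl key, Finset.prod_mul_distrib, Finset.prod_const,
        hgf z, norm_mul, norm_prod]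
      ring
    rw [hGz, mul_comm (R ^ n) M]
    exact mul_le_mul_of_nonneg_right (hMge z (sphere_subset_closedBall hz)) (by positivity)
  -- maximum modulus
  have hmax : ‖G 0‖ ≤ R ^ n * M := by
    apply Complex.norm_le_of_forall_mem_frontier_norm_le (isBounded_ball (x := (0:ℂ)) (r := R))
    · refine DifferentiableOn.diffContOnCl ?_
      refine hGdiff.mono ?_
      rw [closure_ball (0:ℂ) hR.ne']
      exact hcbV
    · intro z hz
      rw [frontier_ball (0:ℂ) hR.ne'] at hz
      exact hbdry z hz
    · rw [closure_ball (0:ℂ) hR.ne']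
      exact h0mem
  -- compute |G 0| and |f 0|
  have hG0 : ‖G 0‖ = ‖g 0‖ * (R^2) ^ n := by
    rw [hG]
    simp [Finset.prod_const, norm_pow, abs_of_pos hR, hn]
  have hf0 : ‖f 0‖ = (∏ a ∈ T, ‖a‖) * ‖g 0‖ := by
    rw [hgf 0, norm_mul, norm_prod]
    congr 1
    exact Finset.prod_congr rfl fun a _ => by rw [zero_sub, norm_neg]
  have hprodle : (∏ a ∈ T, ‖a‖) ≤ r ^ n := by
    rw [← Finset.prod_const]
    refine Finset.prod_le_prod (fun a _ => (norm_nonneg a)) fun a ha => ?_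
    have := ((hmemT a).1 ha).2
    simpa using this
  -- combine
  have hkey : ‖f 0‖ * R ^ n ≤ r ^ n * M := by
    have h1 : ‖g 0‖ * R ^ n ≤ M := by
      have := hmax
      rw [hG0] at this
      have hRn : (0:ℝ) < R ^ n := by positivity
      have heq : ‖g 0‖ * (R^2)^n = (‖g 0‖ * R ^ n) * R ^ n := by
        rw [← pow_mul, two_mul, pow_add]; ring
      rw [heq] at this
      rw [mul_comm (R ^ n) M] at this
      exact le_of_mul_le_mul_right this hRn
    calc ‖f 0‖ * R ^ n
        = (∏ a ∈ T, ‖a‖) * (‖g 0‖ * R ^ n) := by rw [hf0]; ring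
      _ ≤ r ^ n * M := by
          refine mul_le_mul hprodle h1 (by positivity) (by positivity)
  have hfinal : ((R / r) ^ n : ℝ) ≤ M / ‖f 0‖ := by
    rw [div_pow, div_le_div_iff₀ (by positivity) hf0pos]
    calc R ^ n * ‖f 0‖ = ‖f 0‖ * R ^ n := by ring
      _ ≤ r ^ n * M := hkey
      _ = M * r ^ n := by ring
  calc (S.ncard : ℝ) * Real.log (R / r) = Real.log ((R / r) ^ n) := by
        rw [hncard, Real.log_pow]
    _ ≤ Real.log (M / ‖f 0‖) :=
        Real.log_le_log (by positivity) hfinal
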